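/- Let v be a monotone subadditive set function with v(∅)=0 on a finite set of goods, let A be a finite set with v(A) > 0 such that every g ∈ A satisfies v({g}) ≤ v(A)/40. Then A can be partitioned into two disjoint sets A₁ and A₂ with v(A₁) ≥ (1/2 − 1/40)·v(A) and v(A₂) ≥ v(A)/2. -/

import Mathlib

theorem split_in_half {G : Type*} [Fintype G] [DecidableEq G]
    (v : Finset G → ℝ)
    (hempty : v ∅ = 0)
    (hmono : ∀ X Y : Finset G, X ⊆ Y → v X ≤ v Y)
    (hsubadd : ∀ X Y : Finset G, v (X ∪ Y) ≤ v X + v Y)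
    (A : Finset G) (hA : 0 < v A)
    (hsmall : ∀ g ∈ A, v {g} ≤ v A / 40) :
    ∃ A₁ A₂ : Finset G, A₁ ∪ A₂ = A ∧ Disjoint A₁ A₂ ∧
      v A₁ ≥ (1/2 - 1/40) * v A ∧ v A₂ ≥ v A / 2 := by
  classical
  set F : Finset (Finset G) := A.powerset.filter (fun S => v A / 2 ≤ v S) with hF
  have hAF : A ∈ F := by
    simp [hF, Finset.mem_filter, Finset.mem_powerset]
    linarith
  obtain ⟨S, hSF, hSmin⟩ := F.exists_min_image (fun S => S.card) ⟨A, hAF⟩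
  rw [hF, Finset.mem_filter, Finset.mem_powerset] at hSF
  obtain ⟨hSA, hSv⟩ := hSF
  have hSne : S.Nonempty := by
    rcases S.eq_empty_or_nonempty with h | h
    · exfalso; rw [h, hempty] at hSv; linarith
    · exact h
  obtain ⟨g, hg⟩ := hSne
  have hgA : g ∈ A := hSA hg
  have hcard : ¬ (v A / 2 ≤ v (S.erase g)) := by
    intro h
    have hmem : S.erase g ∈ F := by
      rw [hF, Finset.mem_filter, Finset.mem_powerset]
      exact ⟨(S.erase_subset g).trans hSA, h⟩
    have := hSmin _ hmem
    have := S.card_erase_lt_of_mem hg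
    omega
  push_neg at hcard
  have hsplit : v S ≤ v (S.erase g) + v {g} := by
    have : S = S.erase g ∪ {g} := by
      ext x
      simp [Finset.mem_erase, Finset.mem_union]
      constructor
      · intro hx; by_cases hxg : x = g
        · left; exact hxg
        · right; exact ⟨hxg, hx⟩
      · rintro (rfl | ⟨_, hx⟩)
        · exact hg
        · exact hx
    calc v S = v (S.erase g ∪ {g}) := by rw [← this]
      _ ≤ v (S.erase g) + v {g} := hsubadd _ _
  have hgS : v {g} ≤ v A / 40 := hsmall g hgA
  have hvS : v S < v A / 2 + v A / 40 := by linarith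
  refine ⟨A \ S, S, ?_, Finset.sdiff_disjoint, ?_, hSv⟩
  · rw [Finset.sdiff_union_self_eq_union, Finset.union_eq_left.mpr hSA]
  · have hA' : v A ≤ v (A \ S) + v S := by
      calc v A = v ((A \ S) ∪ S) := by
            rw [Finset.sdiff_union_self_eq_union, Finset.union_eq_left.mpr hSA]
        _ ≤ v (A \ S) + v S := hsubadd _ _
    have : (1/2 - 1/40) * v A ≤ v (A \ S) := by linarith
    exact this
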